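/- If a locally geometric poset P has an M-ideal Q with rk(Q) = rk(P) − 1, then P is pure, i.e., all maximal elements of P have rank rk(P). -/

import Mathlib

open scoped Classical
open Polynomial

noncomputable section

namespace PosetArr

/-- The rank of an element of a poset: the length of the longest chain
strictly below it. In a ranked poset this is the common length of all maximal
chains with greatest element `x`. -/
noncomputable def rk {α : Type*} [Preorder α] (x : α) : ℕ :=
  (Set.chainHeight (Set.Iio x) (· < ·)).toNat

/-- The rank of a (finite) poset: the maximal rank of an element. -/
noncomputable def prk (α : Type*) [Preorder α] [Fintype α] : ℕ :=
  Finset.univ.sup (rk (α := α))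

/-- A finite poset is ranked iff covering relations increase `rk` by one;
equivalently, for every `x` all maximal chains with greatest element `x`
have the same length. -/
def IsRanked (α : Type*) [Preorder α] : Prop :=
  ∀ x y : α, x ⋖ y → rk y = rk x + 1

/-- The set of atoms (elements of rank 1) of a poset. -/
def atoms (α : Type*) [Preorder α] : Set α := {x : α | rk x = 1}

/-- `joinSet T` is the join `⋁ T`: the set of minimal upper bounds of `T`. -/
def joinSet {α : Type*} [PartialOrder α] (T : Set α) : Set α :=
  {z | z ∈ upperBounds T ∧ ∀ w ∈ upperBounds T, w ≤ z → w = z}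

/-- `meetSet T` is the meet `⋀ T`: the set of maximal lower bounds of `T`. -/
def meetSet {α : Type*} [PartialOrder α] (T : Set α) : Set α :=
  {z | z ∈ lowerBounds T ∧ ∀ w ∈ lowerBounds T, z ≤ w → w = z}

/-- A poset is a lattice if any two elements have a unique minimal upper
bound and a unique maximal lower bound. -/
def IsLatticePoset (α : Type*) [PartialOrder α] : Prop :=
  ∀ x y : α, (∃! z, z ∈ joinSet {x, y}) ∧ (∃! z, z ∈ meetSet {x, y})

/-- A (finite) lattice is geometric if for all `x, y`: `y` covers `x` iff
there is an atom `a` with `a ≰ x` and `y = x ∨ a`. -/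
def IsGeomLattice (α : Type*) [PartialOrder α] : Prop :=
  IsLatticePoset α ∧
    ∀ x y : α, x ⋖ y ↔ ∃ a : α, a ∈ atoms α ∧ ¬a ≤ x ∧ y ∈ joinSet {x, a}

/-- A finite ranked poset is locally geometric if every lower interval
`P_{≤ x}` is a geometric lattice. -/
def IsLocallyGeometric (α : Type*) [PartialOrder α] : Prop :=
  IsRanked α ∧ ∀ x : α, IsGeomLattice {y : α // y ≤ x}

/-- The Möbius function of a finite poset. -/
noncomputable def mob {α : Type*} [PartialOrder α] [Fintype α] (a b : α) : ℤ :=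
  if a = b then 1
  else if a < b then
    - ∑ c ∈ (Finset.univ.filter (fun c : α => a ≤ c ∧ c < b)).attach, mob a c.1
  else 0
termination_by (Finset.univ.filter (fun c : α => c ≤ b)).card
decreasing_by
  have hc := c.2
  simp only [Finset.mem_filter, Finset.mem_univ, true_and] at hc
  apply Finset.card_lt_card
  constructor
  · intro z hz
    simp only [Finset.mem_filter, Finset.mem_univ, true_and] at hz ⊢
    exact hz.trans hc.2.le
  · intro hsub
    have hb : b ∈ Finset.univ.filter (fun z : α => z ≤ b) := by
      simp
    have := hsub hb
    simp only [Finset.mem_filter, Finset.mem_univ, true_and] at this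
    exact absurd (lt_of_le_of_lt this hc.2) (lt_irrefl _)

/-- The characteristic polynomial of a finite ranked poset with `0̂`:
`χ_P(t) = ∑_x μ(0̂,x) t^(rk(P) - rk(x))`. -/
noncomputable def charPoly (α : Type*) [PartialOrder α] [Fintype α] [OrderBot α] :
    Polynomial ℤ :=
  ∑ x : α, Polynomial.C (mob ⊥ x) * Polynomial.X ^ (prk α - rk x)

/-- The subposet of `P` generated by a set `B` of atoms: the minimal element
together with all joins of subsets of `B`. -/
def genSub {α : Type*} [PartialOrder α] [OrderBot α] (B : Set α) : Set α :=
  insert ⊥ {z | ∃ T ⊆ B, z ∈ joinSet T}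

instance upperOrderBot {α : Type*} [PartialOrder α] (a : α) :
    OrderBot {y : α // a ≤ y} where
  bot := ⟨a, le_rfl⟩
  bot_le y := y.2

instance genSubOrderBot {α : Type*} [PartialOrder α] [OrderBot α] (B : Set α) :
    OrderBot {y : α // y ∈ genSub B} where
  bot := ⟨⊥, Set.mem_insert _ _⟩
  bot_le y := bot_le

/-- `OrderBot` structure on a down-set containing `⊥`. -/
def subsetOrderBot {α : Type*} [PartialOrder α] [OrderBot α] {Q : Set α}
    (h : ⊥ ∈ Q) : OrderBot {y : α // y ∈ Q} where
  bot := ⟨⊥, h⟩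
  bot_le y := bot_le

/-- The class of inductive posets: the smallest class of locally geometric
posets containing the one-element poset and closed under the addition step:
`P ∈ IP` whenever there is an atom `a` such that `P'' = P_{≥a} ∈ IP`,
`P' = P(A(P) \ {a}) ∈ IP` and `χ_{P''} ∣ χ_{P'}`. -/
inductive IsInductivePoset :
    ∀ (β : Type) (po : PartialOrder β) (fin : Fintype β) (bo : OrderBot β), Prop where
  | triv (β : Type) [po : PartialOrder β] [fin : Fintype β] [bo : OrderBot β]
      (h : ∀ x : β, x = ⊥) : IsInductivePoset β po fin bo
  | step (β : Type) [po : PartialOrder β] [fin : Fintype β] [bo : OrderBot β]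
      (hLG : IsLocallyGeometric β) (a : β) (ha : a ∈ atoms β)
      (hres : IsInductivePoset {y : β // a ≤ y} inferInstance inferInstance inferInstance)
      (hdel : IsInductivePoset {y : β // y ∈ genSub (atoms β \ {a})}
        inferInstance inferInstance inferInstance)
      (hdvd : charPoly {y : β // a ≤ y} ∣ charPoly {y : β // y ∈ genSub (atoms β \ {a})}) :
      IsInductivePoset β po fin bo

/-- The class of divisional posets: the smallest class of locally geometric
posets containing the one-element poset and closed under:
`P ∈ DP` whenever there is an atom `a` such that `P'' = P_{≥a} ∈ DP`
and `χ_{P''} ∣ χ_P`. -/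
inductive IsDivisionalPoset :
    ∀ (β : Type) (po : PartialOrder β) (fin : Fintype β) (bo : OrderBot β), Prop where
  | triv (β : Type) [po : PartialOrder β] [fin : Fintype β] [bo : OrderBot β]
      (h : ∀ x : β, x = ⊥) : IsDivisionalPoset β po fin bo
  | step (β : Type) [po : PartialOrder β] [fin : Fintype β] [bo : OrderBot β]
      (hLG : IsLocallyGeometric β) (a : β) (ha : a ∈ atoms β)
      (hres : IsDivisionalPoset {y : β // a ≤ y} inferInstance inferInstance inferInstance)
      (hdvd : charPoly {y : β // a ≤ y} ∣ charPoly β) :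
      IsDivisionalPoset β po fin bo

/-- An element `m` of a (geometric) lattice is modular if
`m ∧ (y ∨ z) = (m ∧ y) ∨ z` for all `z ≤ m` and all `y`. Joins and meets are
expressed via `joinSet` and `meetSet`. -/
def IsModular {β : Type*} [PartialOrder β] (m : β) : Prop :=
  ∀ z y j mj my r : β, z ≤ m →
    j ∈ joinSet {y, z} → mj ∈ meetSet {m, j} →
    my ∈ meetSet {m, y} → r ∈ joinSet {my, z} → mj = r

/-- `Q` is an M-ideal of the locally geometric poset `β`. -/
def IsMIdeal (β : Type*) [PartialOrder β] (Q : Set β) : Prop :=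
  IsLowerSet Q ∧
  (∀ x y : β, Maximal (· ∈ Q) x → Maximal (· ∈ Q) y → rk x = rk y) ∧
  (∀ T ⊆ Q, joinSet T ⊆ Q) ∧
  (∀ y ∈ Q, ∀ a ∈ atoms β, a ∉ Q → (joinSet {a, y}).Nonempty) ∧
  (∀ x : β, IsMax x → ∃ y, Maximal (· ∈ Q) y ∧
    ∃ h : y ≤ x, IsModular (⟨y, h⟩ : {u : β // u ≤ x}))

/-- `Q` is a TM-ideal of the locally geometric poset `β`: an M-ideal where
moreover `|a ∨ y| = 1` for `y ∈ Q` and atoms `a ∉ Q`. -/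
def IsTMIdeal (β : Type*) [PartialOrder β] (Q : Set β) : Prop :=
  IsMIdeal β Q ∧ ∀ y ∈ Q, ∀ a ∈ atoms β, a ∉ Q → ∃! z, z ∈ joinSet {a, y}

/-- A locally geometric poset is supersolvable if it admits an M-chain
`{0̂} = Q_0 ⊊ Q_1 ⊊ ⋯ ⊊ Q_r = P` with each `Q_i` an M-ideal of `Q_{i+1}`
and `rk(Q_i) = i`. -/
def IsSupersolvable (β : Type*) [PartialOrder β] [Fintype β] [OrderBot β] : Prop :=
  ∃ Q : Fin (prk β + 1) → Set β,
    Q 0 = {⊥} ∧ Q (Fin.last _) = Set.univ ∧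
    (∀ i : Fin (prk β), Q i.castSucc ⊂ Q i.succ) ∧
    (∀ i : Fin (prk β + 1), prk {y : β // y ∈ Q i} = i) ∧
    ∀ i : Fin (prk β),
      IsMIdeal {y : β // y ∈ Q i.succ} {z : {y : β // y ∈ Q i.succ} | (z : β) ∈ Q i.castSucc}

/-- A locally geometric poset is strictly supersolvable if it admits a
TM-chain as above, with each `Q_i` a TM-ideal of `Q_{i+1}`. -/
def IsStrictlySupersolvable (β : Type*) [PartialOrder β] [Fintype β] [OrderBot β] : Prop :=
  ∃ Q : Fin (prk β + 1) → Set β,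
    Q 0 = {⊥} ∧ Q (Fin.last _) = Set.univ ∧
    (∀ i : Fin (prk β), Q i.castSucc ⊂ Q i.succ) ∧
    (∀ i : Fin (prk β + 1), prk {y : β // y ∈ Q i} = i) ∧
    ∀ i : Fin (prk β),
      IsTMIdeal {y : β // y ∈ Q i.succ} {z : {y : β // y ∈ Q i.succ} | (z : β) ∈ Q i.castSucc}

end PosetArr

end

namespace PosetArr

section Aux

variable {α : Type*} [PartialOrder α]

lemma chainHeight_ne_top [Fintype α] (s : Set α) : s.chainHeight (· < ·) ≠ ⊤ := by
  exact Set.chainHeight_ne_top_of_finite s (· < ·) (Set.toFinite s)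

lemma rk_mono [Fintype α] {x y : α} (h : x ≤ y) : rk x ≤ rk y := by
  unfold rk
  exact ENat.toNat_le_toNat (Set.chainHeight_mono _ _ _ (Set.Iio_subset_Iio h))
    (chainHeight_ne_top _)

lemma rk_lt_rk [Fintype α] {x y : α} (h : x < y) : rk x < rk y := by
  have h1 : (Set.Iio x).chainHeight (· < ·) + 1 ≤ (Set.Iio y).chainHeight (· < ·) := by
    have : (Set.Iio x).chainHeight (· < ·) + 1 ≤ (insert x (Set.Iio x)).chainHeight (· < ·) := by
      obtain ⟨t, hts, hte, htc⟩ :=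
        Set.exists_eq_chainHeight_of_finite (Set.Iio x) (· < ·) (Set.toFinite _)
      have hxt : x ∉ t := fun hx => lt_irrefl x (hts hx)
      rw [← hte, ← Set.encard_insert_of_notMem hxt]
      apply Set.encard_le_chainHeight_of_isChain _ _ (Set.insert_subset_insert hts)
      exact htc.insert (fun b hb _ => Or.inr (hts hb))
    refine this.trans ?_
    apply Set.chainHeight_mono
    intro u hu
    rcases Set.mem_insert_iff.mp hu with rfl | hu
    · exact h
    · exact lt_trans hu h
  have hy := chainHeight_ne_top (Set.Iio y) (α := α)
  have hx := chainHeight_ne_top (Set.Iio x) (α := α)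
  unfold rk
  lift (Set.Iio y).chainHeight (· < ·) to ℕ using hy with n hn
  lift (Set.Iio x).chainHeight (· < ·) to ℕ using hx with m hm
  rw [ENat.toNat_coe, ENat.toNat_coe]
  exact_mod_cast lt_of_lt_of_le (by exact_mod_cast Nat.lt_succ_self m)
    (by exact_mod_cast h1)

lemma rk_subtype {p : α → Prop} (hp : ∀ ⦃a b : α⦄, b ≤ a → p a → p b)
    (z : α) (hz : p z) : rk (⟨z, hz⟩ : {y : α // p y}) = rk z := by
  unfold rk
  congr 1
  have himg : Subtype.val '' (Set.Iio (⟨z, hz⟩ : {y : α // p y})) = Set.Iio z := by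
    ext u
    constructor
    · rintro ⟨⟨v, hv⟩, hvlt, rfl⟩
      exact hvlt
    · intro hu
      refine ⟨⟨u, hp (le_of_lt hu) hz⟩, ?_, rfl⟩
      simpa [Set.mem_Iio, Subtype.mk_lt_mk] using hu
  rw [← himg]
  exact (Set.chainHeight_eq_of_relEmbedding _ (Subtype.relEmbedding (· < ·) p)).symm

lemma rk_le_prk [Fintype α] (x : α) : rk x ≤ prk α :=
  Finset.le_sup (Finset.mem_univ x)

/-- Every `z ∈ Q` has `rk z ≤ prk Q` when `Q` is a lower set. -/
lemma rk_le_prk_of_mem [Fintype α] {Q : Set α} (hQ : IsLowerSet Q)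
    {z : α} (hz : z ∈ Q) : rk z ≤ prk {y : α // y ∈ Q} := by
  rw [← rk_subtype (fun a b hba ha => hQ hba ha) z hz]
  exact rk_le_prk _

/-- A maximal element of a lower set `Q` realizing `prk Q`. -/
lemma exists_maximal_rk_eq_prk [Fintype α] {Q : Set α} (hQ : IsLowerSet Q)
    (hne : Q.Nonempty) :
    ∃ z, Maximal (· ∈ Q) z ∧ rk z = prk {y : α // y ∈ Q} := by
  have hne' : (Finset.univ : Finset {y : α // y ∈ Q}).Nonempty := by
    obtain ⟨w, hw⟩ := hne
    exact ⟨⟨w, hw⟩, Finset.mem_univ _⟩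
  obtain ⟨z₀, _, hz₀⟩ := Finset.exists_mem_eq_sup Finset.univ hne'
    (rk (α := {y : α // y ∈ Q}))
  have hz₀rk : rk (z₀ : α) = prk {y : α // y ∈ Q} := by
    rw [← rk_subtype (fun a b hba ha => hQ hba ha) (z₀ : α) z₀.2]
    exact hz₀.symm
  obtain ⟨z₁, hle, hmax⟩ := Finite.exists_le_maximal z₀.2
  refine ⟨z₁, hmax, le_antisymm (rk_le_prk_of_mem hQ hmax.1) ?_⟩
  rw [← hz₀rk]
  exact rk_mono hle

/-- In a locally geometric poset, if all atoms lie in a join-closed set `Q`,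
then every element of positive rank lies in `Q`. -/
lemma mem_of_all_atoms_mem {α : Type} [PartialOrder α] [Fintype α]
    (hLG : IsLocallyGeometric α) {Q : Set α}
    (hjoin : ∀ T ⊆ Q, joinSet T ⊆ Q)
    (hatoms : atoms α ⊆ Q) {z : α} (hz : 1 ≤ rk z) : z ∈ Q := by
  set T : Set α := atoms α ∩ Set.Iic z with hT
  have hTQ : T ⊆ Q := fun a ha => hatoms ha.1
  apply hjoin T hTQ
  constructor
  · intro a ha
    exact ha.2
  · intro w hw hwz
    by_contra hne
    have hwlt : w < z := lt_of_le_of_ne hwz hne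
    -- work in the geometric lattice `{u // u ≤ z}`
    have hlt : (⟨w, hwz⟩ : {u : α // u ≤ z}) < ⟨z, le_rfl⟩ :=
      Subtype.mk_lt_mk.mpr hwlt
    obtain ⟨v, hcov, _⟩ := exists_covBy_le_of_lt hlt
    obtain ⟨a, haAtom, haNle, _⟩ :=
      ((hLG.2 z).2 ⟨w, hwz⟩ v).mp hcov
    have haval : (a : α) ∈ atoms α := by
      have := rk_subtype (p := fun u => u ≤ z)
        (fun u v hvu hu => le_trans hvu hu) (a : α) a.2
      have ha1 : rk a = 1 := haAtom
      simpa [atoms, ← this] using ha1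
    have haT : (a : α) ∈ T := ⟨haval, a.2⟩
    exact haNle (Subtype.coe_le_coe.mp (hw haT))

end Aux

/-- If a locally geometric poset `P` has an M-ideal `Q` with
`rk(Q) = rk(P) − 1`, then `P` is pure: all maximal elements have rank `rk(P)`. -/
theorem mIdeal_pure (α : Type) [PartialOrder α] [Fintype α]
    (hLG : IsLocallyGeometric α) (Q : Set α) (hQ : IsMIdeal α Q)
    (hrk : prk {y : α // y ∈ Q} + 1 = prk α) :
    ∀ x : α, IsMax x → rk x = prk α := by
  intro x hx
  obtain ⟨hlower, hpure, hjoin, hatomjoin, hmodular⟩ := hQ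
  obtain ⟨y, hymax, hyx, -⟩ := hmodular x hx
  have hQne : Q.Nonempty := ⟨y, hymax.1⟩
  obtain ⟨z₁, hz₁max, hz₁rk⟩ := exists_maximal_rk_eq_prk hlower hQne
  have hyrk : rk y = prk {u : α // u ∈ Q} := by
    rw [← hz₁rk]; exact hpure y z₁ hymax hz₁max
  -- there is an atom of `α` outside `Q`
  have hexatom : ∃ a ∈ atoms α, a ∉ Q := by
    by_contra hall
    push_neg at hall
    -- all atoms are in Q; then the element of maximal rank is in Q
    have hne' : (Finset.univ : Finset α).Nonempty := ⟨x, Finset.mem_univ x⟩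
    obtain ⟨z, -, hz⟩ := Finset.exists_mem_eq_sup Finset.univ hne' (rk (α := α))
    have hzrk : rk z = prk α := hz.symm
    have hz1 : 1 ≤ rk z := by omega
    have hzQ : z ∈ Q := mem_of_all_atoms_mem hLG hjoin hall hz1
    have := rk_le_prk_of_mem hlower hzQ
    omega
  obtain ⟨a, haA, haQ⟩ := hexatom
  -- x cannot be in Q
  have hxQ : x ∉ Q := by
    intro hxQ
    obtain ⟨j, hjU, -⟩ := hatomjoin x hxQ a haA haQ
    have hxj : x ≤ j := hjU (Set.mem_insert_of_mem _ rfl)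
    have hjx : j = x := le_antisymm (hx hxj) hxj
    have : a ∈ Q := hlower (hjx ▸ hjU (Set.mem_insert _ _)) hxQ
    exact haQ this
  -- hence `y < x`, so `rk x ≥ rk y + 1 = prk α`
  have hylt : y < x := lt_of_le_of_ne hyx (fun h => hxQ (h ▸ hymax.1))
  have h1 : rk y < rk x := rk_lt_rk hylt
  have h2 : rk x ≤ prk α := rk_le_prk x
  omega
end PosetArr
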